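/- arXiv:1408.4962 — 2 statements merged into one kernel-verified Lean document; each statement's English description precedes it below -/
import Mathlib

section
/- If Y is a wide-sense stationary random field on the unitary dual Ĝ of a compact group G, then its covariance function C_Y(π) = E(Y_π · conj(Y_ε)) is positive definite: for all N, π₁,…,π_N ∈ Ĝ and c₁,…,c_N ∈ ℂ, ∑_{m,n} c_m conj(c_n) ∑_{π∈Ĝ} M(π_m ⊗ π_n*, π) C_Y(π) ≥ 0. -/
open Matrix Kronecker ComplexConjugate
open scoped Classical ComplexOrder

noncomputable section

universe u

variable (G : Type u) [Group G] [TopologicalSpace G]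

/-- A continuous finite-dimensional unitary representation of `G`,
realised as a family of unitary matrices. -/
structure CRep where
  ι : Type
  [fin : Fintype ι]
  [dec : DecidableEq ι]
  ρ : G → Matrix ι ι ℂ
  map_one : ρ 1 = 1
  map_mul : ∀ g h : G, ρ (g * h) = ρ g * ρ h
  unitary : ∀ g : G, ρ g ∈ Matrix.unitaryGroup ι ℂ
  cont : Continuous ρ

namespace CRep

attribute [instance] CRep.fin CRep.dec

variable {G}

/-- The character of a representation. -/
def char (π : CRep G) (g : G) : ℂ := (π.ρ g).trace

/-- The trivial representation. -/
def trivialRep : CRep G where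
  ι := Unit
  ρ := fun _ => 1
  map_one := rfl
  map_mul := by intros; simp
  unitary := fun _ => one_mem _
  cont := continuous_const

/-- The conjugate (contragredient) representation. -/
def conjRep (π : CRep G) : CRep G where
  ι := π.ι
  ρ := fun g => (π.ρ g).map (starRingEnd ℂ)
  map_one := by
    try dsimp only
    rw [π.map_one]
    exact Matrix.map_one _ (map_zero _) (_root_.map_one _)
  map_mul := by
    intro g h
    try dsimp only
    rw [π.map_mul, Matrix.map_mul]
  unitary := by
    intro g
    try dsimp only
    have h := π.unitary g
    rw [Matrix.mem_unitaryGroup_iff] at h ⊢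
    have hs : star ((π.ρ g).map (starRingEnd ℂ)) = (π.ρ g)ᵀ := by
      ext i j
      simp [Matrix.conjTranspose_apply]
    calc (π.ρ g).map (starRingEnd ℂ) * star ((π.ρ g).map (starRingEnd ℂ))
        = (π.ρ g).map (starRingEnd ℂ) * (π.ρ g)ᵀ := by rw [hs]
      _ = (π.ρ g * star (π.ρ g)).map (starRingEnd ℂ) := by
          rw [Matrix.map_mul]
          congr 1
          ext i j
          simp [Matrix.conjTranspose_apply]
      _ = 1 := by rw [h]; exact Matrix.map_one _ (map_zero _) (_root_.map_one _)
  cont := π.cont.matrix_map Complex.continuous_conj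

/-- The tensor product of two representations (Kronecker product of matrices). -/
def tensor (π₁ π₂ : CRep G) : CRep G where
  ι := π₁.ι × π₂.ι
  ρ := fun g => π₁.ρ g ⊗ₖ π₂.ρ g
  map_one := by
    try dsimp only
    rw [π₁.map_one, π₂.map_one]; exact Matrix.one_kronecker_one
  map_mul := by
    intro g h
    try dsimp only
    rw [π₁.map_mul, π₂.map_mul, Matrix.mul_kronecker_mul]
  unitary := by
    intro g
    try dsimp only
    have h₁ := π₁.unitary g
    have h₂ := π₂.unitary g
    rw [Matrix.mem_unitaryGroup_iff] at h₁ h₂ ⊢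
    have hstar : star (π₁.ρ g ⊗ₖ π₂.ρ g) = star (π₁.ρ g) ⊗ₖ star (π₂.ρ g) := by
      ext i j
      simp [Matrix.conjTranspose_apply, Matrix.kroneckerMap_apply]
    rw [hstar, ← Matrix.mul_kronecker_mul, h₁, h₂, Matrix.one_kronecker_one]
  cont := continuous_matrix fun i j =>
    (π₁.cont.matrix_elem i.1 j.1).mul (π₂.cont.matrix_elem i.2 j.2)

/-- Irreducibility: every matrix commuting with the representation is scalar (Schur). -/
def IsIrreducible (π : CRep G) : Prop :=
  ∀ A : Matrix π.ι π.ι ℂ, (∀ g, A * π.ρ g = π.ρ g * A) →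
    ∃ c : ℂ, A = c • (1 : Matrix π.ι π.ι ℂ)

/-- (Unitary) equivalence of representations. -/
def Equiv (π₁ π₂ : CRep G) : Prop :=
  ∃ (f : Matrix π₂.ι π₁.ι ℂ) (f' : Matrix π₁.ι π₂.ι ℂ),
    (∀ g, f * π₁.ρ g = π₂.ρ g * f) ∧ f * f' = 1 ∧ f' * f = 1

end CRep

open MeasureTheory

variable [IsTopologicalGroup G] [CompactSpace G] [MeasurableSpace G] [BorelSpace G]
variable {G}

/-- The multiplicity `M(σ, π) = ∫_G χ_σ(g⁻¹) χ_π(g) dg`. -/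
def mult (μ : Measure G) (σ π : CRep G) : ℂ :=
  ∫ g, σ.char g⁻¹ * π.char g ∂μ

variable (G) in
/-- A model of the unitary dual `Ĝ`: a complete irredundant family of
irreducible unitary representations, containing the trivial representation. -/
structure UnitaryDual where
  idx : Type
  rep : idx → CRep G
  irr : ∀ i, (rep i).IsIrreducible
  complete : ∀ π : CRep G, π.IsIrreducible → ∃ i, CRep.Equiv π (rep i)
  distinct : ∀ i j, CRep.Equiv (rep i) (rep j) → i = j
  e : idx
  he : CRep.Equiv (rep e) CRep.trivialRep

/-- The covariance `E(Y_σ * conj(Y_τ))`. -/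
def cov {Ω : Type*} [MeasurableSpace Ω] (P : Measure Ω)
    (Y : CRep G → Ω → ℂ) (σ τ : CRep G) : ℂ :=
  ∫ ω, Y σ ω * (starRingEnd ℂ) (Y τ ω) ∂P

/-- Wide-sense stationarity of a random field on the unitary dual. -/
def Stationary {Ω : Type*} [MeasurableSpace Ω] (P : Measure Ω)
    (D : UnitaryDual G) (Y : CRep G → Ω → ℂ) : Prop :=
  ∀ i j : D.idx,
    cov P Y (D.rep i) (D.rep j)
      = cov P Y ((D.rep i).tensor (D.rep j).conjRep) (D.rep D.e)

/-- Decomposability of a random field over the dual. -/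
def Decomposable (μ : Measure G) {Ω : Type*} [MeasurableSpace Ω] (P : Measure Ω)
    (D : UnitaryDual G) (Y : CRep G → Ω → ℂ) : Prop :=
  ∀ σ : CRep G, ∀ᵐ ω ∂P,
    Y σ ω = ∑' i : D.idx, mult μ σ (D.rep i) * Y (D.rep i) ω

section Aux
open MeasureTheory

variable {Ω : Type*} [MeasurableSpace Ω] {P : Measure Ω}

lemma memLp_conj {g : Ω → ℂ} (hg : MemLp g 2 P) :
    MemLp (fun ω => (starRingEnd ℂ) (g ω)) 2 P := by
  refine MemLp.of_le hg (Complex.continuous_conj.comp_aestronglyMeasurable hg.1) ?_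
  filter_upwards with ω; simp

lemma integrable_mul_conj {f g : Ω → ℂ} (hf : MemLp f 2 P) (hg : MemLp g 2 P) :
    Integrable (fun ω => f ω * (starRingEnd ℂ) (g ω)) P := by
  have h := (memLp_conj hg).smul (r := 1) hf
    (hpqr := ⟨by simp [one_div, ENNReal.inv_two_add_inv_two]⟩)
  rw [memLp_one_iff_integrable] at h
  exact h

end Aux

/-- The covariance function of a stationary random field on the unitary dual is
positive definite. -/
theorem stmt3 (μ : Measure G) [μ.IsHaarMeasure] [IsProbabilityMeasure μ]
    (D : UnitaryDual G) {Ω : Type*} [MeasurableSpace Ω] (P : Measure Ω)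
    [IsProbabilityMeasure P] (Y : CRep G → Ω → ℂ)
    (hL2 : ∀ σ : CRep G, MemLp (Y σ) 2 P)
    (hdec : Decomposable μ P D Y) (hstat : Stationary P D Y)
    (hfin : ∀ σ : CRep G, {i : D.idx | mult μ σ (D.rep i) ≠ 0}.Finite)
    (N : ℕ) (π : Fin N → D.idx) (c : Fin N → ℂ) :
    0 ≤ ∑ m : Fin N, ∑ n : Fin N, c m * (starRingEnd ℂ) (c n) *
        ∑' i : D.idx, mult μ ((D.rep (π m)).tensor (D.rep (π n)).conjRep) (D.rep i) *
          cov P Y (D.rep i) (D.rep D.e) := by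
  have hint : ∀ σ τ : CRep G, Integrable (fun ω => Y σ ω * (starRingEnd ℂ) (Y τ ω)) P :=
    fun σ τ => integrable_mul_conj (hL2 σ) (hL2 τ)
  -- Step 1: the inner tsum equals cov (rep π m) (rep π n)
  have key : ∀ m n : Fin N,
      (∑' i : D.idx, mult μ ((D.rep (π m)).tensor (D.rep (π n)).conjRep) (D.rep i) *
        cov P Y (D.rep i) (D.rep D.e)) = cov P Y (D.rep (π m)) (D.rep (π n)) := by
    intro m n
    set σ := (D.rep (π m)).tensor (D.rep (π n)).conjRep with hσ
    have hs := hfin σ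
    have h0 : ∀ i ∉ hs.toFinset,
        mult μ σ (D.rep i) * cov P Y (D.rep i) (D.rep D.e) = 0 := by
      intro i hi
      rw [Set.Finite.mem_toFinset] at hi
      simp only [Set.mem_setOf_eq, not_not] at hi
      rw [hi, zero_mul]
    rw [tsum_eq_sum h0, hstat (π m) (π n)]
    -- now show sum over hs.toFinset = cov σ (rep e)
    have hae := hdec σ
    have hcov : cov P Y σ (D.rep D.e)
        = ∫ ω, (∑ i ∈ hs.toFinset, mult μ σ (D.rep i) * Y (D.rep i) ω) *
            (starRingEnd ℂ) (Y (D.rep D.e) ω) ∂P := by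
      refine integral_congr_ae ?_
      filter_upwards [hae] with ω hω
      rw [hω]
      congr 1
      refine tsum_eq_sum ?_
      intro i hi
      rw [Set.Finite.mem_toFinset] at hi
      simp only [Set.mem_setOf_eq, not_not] at hi
      rw [hi, zero_mul]
    rw [hcov]
    rw [show (fun ω => (∑ i ∈ hs.toFinset, mult μ σ (D.rep i) * Y (D.rep i) ω) *
          (starRingEnd ℂ) (Y (D.rep D.e) ω))
        = fun ω => ∑ i ∈ hs.toFinset,
            mult μ σ (D.rep i) * (Y (D.rep i) ω * (starRingEnd ℂ) (Y (D.rep D.e) ω)) from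
      funext fun ω => by rw [Finset.sum_mul]; exact Finset.sum_congr rfl fun i _ => mul_assoc _ _ _]
    rw [integral_finset_sum _ (fun i _ => (hint (D.rep i) (D.rep D.e)).const_mul _)]
    exact Finset.sum_congr rfl fun i _ => by
      rw [integral_const_mul]; rfl
  simp only [key]
  -- Step 2: positivity
  set S : Ω → ℂ := fun ω => ∑ m : Fin N, c m * Y (D.rep (π m)) ω with hS
  have hSsq : (∑ m : Fin N, ∑ n : Fin N,
      c m * (starRingEnd ℂ) (c n) * cov P Y (D.rep (π m)) (D.rep (π n)))
      = ∫ ω, S ω * (starRingEnd ℂ) (S ω) ∂P := by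
    have hpt : ∀ ω, S ω * (starRingEnd ℂ) (S ω)
        = ∑ m : Fin N, ∑ n : Fin N, c m * (starRingEnd ℂ) (c n) *
            (Y (D.rep (π m)) ω * (starRingEnd ℂ) (Y (D.rep (π n)) ω)) := by
      intro ω
      rw [hS]
      simp only [map_sum, Finset.sum_mul_sum]
      exact Finset.sum_congr rfl fun m _ => Finset.sum_congr rfl fun n _ => by
        rw [RingHom.map_mul]; ring
    simp only [hpt]
    rw [integral_finset_sum _ (fun m _ => integrable_finset_sum _
      (fun n _ => (hint _ _).const_mul _))]
    refine Finset.sum_congr rfl fun m _ => ?_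
    rw [integral_finset_sum _ (fun n _ => (hint _ _).const_mul _)]
    exact Finset.sum_congr rfl fun n _ => by rw [integral_const_mul]; rfl
  rw [hSsq]
  have : (∫ ω, S ω * (starRingEnd ℂ) (S ω) ∂P)
      = ((∫ ω, Complex.normSq (S ω) ∂P : ℝ) : ℂ) := by
    rw [show ((∫ ω, Complex.normSq (S ω) ∂P : ℝ) : ℂ)
        = ∫ ω, ((Complex.normSq (S ω) : ℝ) : ℂ) ∂P from (integral_ofReal (𝕜 := ℂ)).symm]
    exact integral_congr_ae (Filter.Eventually.of_forall fun ω => Complex.mul_conj _)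
  rw [this, Complex.zero_le_real]
  exact integral_nonneg fun ω => Complex.normSq_nonneg _
end
end

section
/- White noise on the unitary dual of a compact group is stationary: if Z is a decomposable random field with E(Z_π conj(Z_{π'})) = δ_{π,π'} for all π, π' ∈ Ĝ, then E(Z_{π₁} conj(Z_{π₂})) = E(Z_{π₁⊗π₂*} conj(Z_ε)) for all π₁, π₂ ∈ Ĝ. -/
open Matrix Kronecker ComplexConjugate
open scoped Classical ComplexOrder

noncomputable section

universe u

variable (G : Type u) [Group G] [TopologicalSpace G]

open MeasureTheory

variable [IsTopologicalGroup G] [CompactSpace G] [MeasurableSpace G] [BorelSpace G]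
variable {G}

section AuxLemmas

open MeasureTheory

lemma CRep.rho_inv (π : CRep G) (g : G) : π.ρ g⁻¹ = star (π.ρ g) := by
  have h1 : π.ρ g * π.ρ g⁻¹ = 1 := by rw [← π.map_mul, mul_inv_cancel, π.map_one]
  have h2 : star (π.ρ g) * π.ρ g = 1 := Matrix.mem_unitaryGroup_iff'.mp (π.unitary g)
  calc π.ρ g⁻¹ = 1 * π.ρ g⁻¹ := (one_mul _).symm
    _ = star (π.ρ g) * π.ρ g * π.ρ g⁻¹ := by rw [h2]
    _ = star (π.ρ g) * (π.ρ g * π.ρ g⁻¹) := mul_assoc _ _ _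
    _ = star (π.ρ g) := by rw [h1, mul_one]

lemma CRep.char_inv (π : CRep G) (g : G) : π.char g⁻¹ = conj (π.char g) := by
  rw [char, char, rho_inv]
  exact Matrix.trace_conjTranspose _

lemma CRep.char_conjRep (π : CRep G) (g : G) : π.conjRep.char g = conj (π.char g) := by
  simp [CRep.char, CRep.conjRep, Matrix.trace, Matrix.diag, map_sum]
  rfl

lemma CRep.char_tensor (π₁ π₂ : CRep G) (g : G) :
    (π₁.tensor π₂).char g = π₁.char g * π₂.char g := by
  simp [CRep.char, CRep.tensor, Matrix.trace_kronecker]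
  exact Matrix.trace_kronecker _ _

lemma UnitaryDual.char_e (D : UnitaryDual G) (g : G) : (D.rep D.e).char g = 1 := by
  obtain ⟨f, f', hint, hff', hf'f⟩ := D.he
  have hfρ : f * (D.rep D.e).ρ g = f := by
    have h := hint g
    exact h.trans (Matrix.one_mul f)
  have hρ : (D.rep D.e).ρ g = 1 := by
    calc (D.rep D.e).ρ g = (f' * f) * (D.rep D.e).ρ g := by rw [hf'f, one_mul]
      _ = f' * (f * (D.rep D.e).ρ g) := Matrix.mul_assoc _ _ _
      _ = f' * f := by rw [hfρ]
      _ = 1 := hf'f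
  have hcard : ((Fintype.card (D.rep D.e).ι : ℂ)) = 1 := by
    have h := Matrix.trace_mul_comm f f'
    rw [hff', hf'f] at h
    have h2 : Fintype.card (CRep.trivialRep (G := G)).ι = 1 := Fintype.card_unit
    simpa [Matrix.trace_one, h2] using h.symm
  rw [CRep.char, hρ, Matrix.trace_one, hcard]

lemma cov_eq_mult (μ : Measure G) (D : UnitaryDual G) {Ω : Type*} [MeasurableSpace Ω]
    (P : Measure Ω) (Z : CRep G → Ω → ℂ)
    (hL2 : ∀ σ : CRep G, MemLp (Z σ) 2 P)
    (hdec : Decomposable μ P D Z)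
    (hfin : ∀ σ : CRep G, {i : D.idx | mult μ σ (D.rep i) ≠ 0}.Finite)
    (hwn : ∀ i j : D.idx, cov P Z (D.rep i) (D.rep j) = if i = j then 1 else 0)
    (σ : CRep G) (j : D.idx) :
    cov P Z σ (D.rep j) = mult μ σ (D.rep j) := by
  classical
  set S := (hfin σ).toFinset with hS
  have hmul : ∀ τ₁ τ₂ : CRep G,
      Integrable (fun ω => Z τ₁ ω * (starRingEnd ℂ) (Z τ₂ ω)) P := by
    intro τ₁ τ₂
    have hc : MemLp (fun ω => (starRingEnd ℂ) (Z τ₂ ω)) 2 P := by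
      refine (hL2 τ₂).of_le_mul (c := 1)
        (Complex.continuous_conj.comp_aestronglyMeasurable (hL2 τ₂).1) ?_
      filter_upwards with x; simp
    rw [← memLp_one_iff_integrable]
    exact (hc.smul (hL2 τ₁) (hpqr := ⟨by rw [inv_one, ← one_div]; exact ENNReal.add_halves 1⟩)
      : MemLp (Z τ₁ • fun ω => (starRingEnd ℂ) (Z τ₂ ω)) 1 P)
  have hae : ∀ᵐ ω ∂P, Z σ ω * (starRingEnd ℂ) (Z (D.rep j) ω)
      = ∑ k ∈ S, mult μ σ (D.rep k) * (Z (D.rep k) ω * (starRingEnd ℂ) (Z (D.rep j) ω)) := by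
    filter_upwards [hdec σ] with ω hω
    rw [hω, tsum_eq_sum (s := S) (fun k hk => by
      have h0 : mult μ σ (D.rep k) = 0 := by
        by_contra h; exact hk ((hfin σ).mem_toFinset.mpr h)
      rw [h0, zero_mul]), Finset.sum_mul]
    exact Finset.sum_congr rfl fun k _ => (mul_assoc _ _ _)
  have hcov : cov P Z σ (D.rep j)
      = ∫ ω, Z σ ω * (starRingEnd ℂ) (Z (D.rep j) ω) ∂P := rfl
  rw [hcov, integral_congr_ae hae,
    integral_finset_sum _ (fun k _ => ((hmul _ _).const_mul _))]
  simp_rw [integral_const_mul]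
  have hterm : ∀ k ∈ S,
      mult μ σ (D.rep k) * ∫ ω, Z (D.rep k) ω * (starRingEnd ℂ) (Z (D.rep j) ω) ∂P
      = if k = j then mult μ σ (D.rep k) else 0 := by
    intro k _
    rw [show (∫ ω, Z (D.rep k) ω * (starRingEnd ℂ) (Z (D.rep j) ω) ∂P)
        = cov P Z (D.rep k) (D.rep j) from rfl, hwn k j]
    split <;> simp
  rw [Finset.sum_congr rfl hterm, Finset.sum_ite_eq' S j (fun k => mult μ σ (D.rep k))]
  split
  · rfl
  · next h =>
    have h0 : mult μ σ (D.rep j) = 0 := by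
      by_contra h1; exact h ((hfin σ).mem_toFinset.mpr h1)
    rw [h0]

end AuxLemmas

/-- White noise on the unitary dual of a compact group is stationary. -/
theorem stmt5 (μ : Measure G) [μ.IsHaarMeasure] [IsProbabilityMeasure μ]
    (D : UnitaryDual G) {Ω : Type*} [MeasurableSpace Ω] (P : Measure Ω)
    [IsProbabilityMeasure P] (Z : CRep G → Ω → ℂ)
    (hL2 : ∀ σ : CRep G, MemLp (Z σ) 2 P)
    (hdec : Decomposable μ P D Z)
    (hfin : ∀ σ : CRep G, {i : D.idx | mult μ σ (D.rep i) ≠ 0}.Finite)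
    (hwn : ∀ i j : D.idx, cov P Z (D.rep i) (D.rep j) = if i = j then 1 else 0) :
    Stationary P D Z := by
  intro i j
  rw [cov_eq_mult μ D P Z hL2 hdec hfin hwn (D.rep i) j,
      cov_eq_mult μ D P Z hL2 hdec hfin hwn ((D.rep i).tensor (D.rep j).conjRep) D.e]
  unfold mult
  refine integral_congr_ae (Filter.Eventually.of_forall fun g => ?_)
  dsimp only
  rw [CRep.char_tensor, CRep.char_conjRep, CRep.char_inv (D.rep j), D.char_e, mul_one,
    Complex.conj_conj]
end
end
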